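/- Let μ^s denote the uniform probability measure on the sphere S^{m-1}_s(0) of radius s ≥ 0 in ℝ^m, let r, α > 0 with α > r, let s ∈ [0, r], let v be a unit vector, and let t ∈ [0, r]. Define H^{(α,μ^s,m)}(tv) := ∫_{B_r(0)}(α − ‖x‖) dμ^s(x) − ∫_{B_α(tv) ∩ B_r(0)}(α − d(tv,x)) dμ^s(x). Then: (1) if s = 0, H^{(α,μ^s,m)}(tv) = t; (2) if 0 < s ≤ α − t, H^{(α,μ^s,m)}(tv) = E d(tv, x) − s where x ~ μ^s; (3) if s ≥ α − t, H^{(α,μ^s,m)}(tv) = α − s − ∫_0^{θ̄}(α − √(s² + t² − 2st cos θ)) dμ̃(θ), where θ̄ = arccos((s² + t² − α²)/(2st)) ≤ π and μ̃ is the law of the angle between v and a uniformly random point on the unit sphere. -/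

import Mathlib

set_option maxHeartbeats 1000000

open MeasureTheory Metric Real
open scoped ENNReal NNReal RealInnerProductSpace Pointwise

/-- The uniform probability measure on the sphere of radius `s` centered at the origin
in `ℝ^m`; for `s = 0` it is the Dirac measure at the origin. -/
noncomputable def sphereUniform (m : ℕ) (s : ℝ) : Measure (EuclideanSpace ℝ (Fin m)) :=
  if s = 0 then Measure.dirac 0
  else (μH[(m : ℝ) - 1] (sphere (0 : EuclideanSpace ℝ (Fin m)) s))⁻¹ •
    (μH[(m : ℝ) - 1]).restrict (sphere (0 : EuclideanSpace ℝ (Fin m)) s)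

/-- `H^{(α,μ,m)}(z) = ∫_{B_r(0)} (α − ‖x‖) dμ(x) − ∫_{B_α(z) ∩ B_r(0)} (α − d(z,x)) dμ(x)`. -/
noncomputable def Hfun (m : ℕ) (α r : ℝ) (μ : Measure (EuclideanSpace ℝ (Fin m)))
    (z : EuclideanSpace ℝ (Fin m)) : ℝ :=
  (∫ x in closedBall (0 : EuclideanSpace ℝ (Fin m)) r, (α - ‖x‖) ∂μ) -
    ∫ x in closedBall z α ∩ closedBall (0 : EuclideanSpace ℝ (Fin m)) r,
      (α - dist z x) ∂μ

-- coordinate bound in Euclidean space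
lemma coord_le {k : ℕ} (x : EuclideanSpace ℝ (Fin k)) (i : Fin k) : |x i| ≤ ‖x‖ := by
  rw [EuclideanSpace.norm_eq]
  have : |x i| = Real.sqrt (‖x i‖ ^ 2) := by
    rw [Real.sqrt_sq (norm_nonneg _)]; rfl
  rw [this]
  apply Real.sqrt_le_sqrt
  exact Finset.single_le_sum (fun j _ => sq_nonneg ‖x j‖) (Finset.mem_univ i)


lemma radial_lip {F : Type*} [NormedAddCommGroup F] [NormedSpace ℝ F]
    {a b : F} (ha : 1 ≤ ‖a‖) (hb : 1 ≤ ‖b‖) :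
    ‖‖a‖⁻¹ • a - ‖b‖⁻¹ • b‖ ≤ 2 * ‖a - b‖ := by
  have ha0 : (0:ℝ) < ‖a‖ := lt_of_lt_of_le one_pos ha
  have hb0 : (0:ℝ) < ‖b‖ := lt_of_lt_of_le one_pos hb
  have key : ‖a‖⁻¹ • a - ‖b‖⁻¹ • b = ‖a‖⁻¹ • (a - b) + (‖a‖⁻¹ - ‖b‖⁻¹) • b := by
    rw [smul_sub, sub_smul]; abel
  rw [key]
  have h1 : ‖‖a‖⁻¹ • (a - b)‖ ≤ ‖a - b‖ := by
    rw [norm_smul, Real.norm_eq_abs, abs_of_pos (by positivity)]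
    nlinarith [norm_nonneg (a - b), inv_le_one_of_one_le₀ ha, inv_nonneg.mpr ha0.le]
  have h2 : ‖(‖a‖⁻¹ - ‖b‖⁻¹) • b‖ ≤ ‖a - b‖ := by
    rw [norm_smul, Real.norm_eq_abs]
    have hd : ‖a‖⁻¹ - ‖b‖⁻¹ = (‖b‖ - ‖a‖) / (‖a‖ * ‖b‖) := by field_simp
    rw [hd, abs_div, abs_of_pos (by positivity : (0:ℝ) < ‖a‖ * ‖b‖)]
    have habs : |‖b‖ - ‖a‖| ≤ ‖a - b‖ := by
      rw [← norm_sub_rev]; exact abs_norm_sub_norm_le b a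
    rw [div_mul_eq_mul_div]
    rw [div_le_iff₀ (by positivity)]
    calc |‖b‖ - ‖a‖| * ‖b‖ ≤ ‖a - b‖ * ‖b‖ := by
          apply mul_le_mul_of_nonneg_right habs (norm_nonneg _)
      _ ≤ ‖a - b‖ * (‖a‖ * ‖b‖) := by nlinarith [norm_nonneg (a-b), norm_nonneg b, mul_le_mul_of_nonneg_right ha (norm_nonneg b)]
  calc ‖‖a‖⁻¹ • (a - b) + (‖a‖⁻¹ - ‖b‖⁻¹) • b‖
      ≤ ‖‖a‖⁻¹ • (a - b)‖ + ‖(‖a‖⁻¹ - ‖b‖⁻¹) • b‖ := norm_add_le _ _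
    _ ≤ 2 * ‖a - b‖ := by linarith


lemma sphere_meas_pos (n : ℕ) :
    0 < μH[(n:ℝ)] (sphere (0 : EuclideanSpace ℝ (Fin (n+1))) 1) := by
  set E := EuclideanSpace ℝ (Fin (n+1))
  set proj : E → (Fin n → ℝ) := fun x j => x j.castSucc with hproj
  have hlip : LipschitzWith 1 proj := by
    apply LipschitzWith.of_dist_le_mul
    intro x y
    rw [NNReal.coe_one, one_mul, dist_pi_le_iff dist_nonneg]
    intro j
    have : dist (proj x j) (proj y j) = |(x - y) j.castSucc| := by
      rw [Real.dist_eq]; rfl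
    rw [this, dist_eq_norm]
    exact coord_le (x - y) j.castSucc
  have hsub : closedBall (0 : Fin n → ℝ) (((n:ℝ)+1))⁻¹ ⊆ proj '' (sphere (0:E) 1) := by
    intro u hu
    have hub : ∀ j, |u j| ≤ ((n:ℝ)+1)⁻¹ := by
      intro j
      have := norm_le_pi_norm u j
      rw [mem_closedBall_zero_iff] at hu
      calc |u j| = ‖u j‖ := rfl
        _ ≤ ‖u‖ := norm_le_pi_norm u j
        _ ≤ _ := hu
    have hq : ∑ j, u j ^ 2 ≤ 1 := by
      calc ∑ j, u j ^ 2 ≤ ∑ _j : Fin n, (((n:ℝ)+1))⁻¹ ^ 2 := by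
            apply Finset.sum_le_sum
            intro j _
            have := hub j
            nlinarith [abs_nonneg (u j), sq_abs (u j),
              mul_self_le_mul_self (abs_nonneg (u j)) (hub j)]
        _ = (n:ℝ) * (((n:ℝ)+1))⁻¹ ^ 2 := by
            simp [Finset.sum_const, mul_comm]
        _ ≤ 1 := by
            rw [inv_pow, ← div_eq_mul_inv, div_le_one (by positivity)]
            nlinarith [Nat.cast_nonneg (α := ℝ) n]
    set c : ℝ := Real.sqrt (1 - ∑ j, u j ^ 2) with hc
    set x : E := WithLp.toLp 2 (Fin.snoc u c : Fin (n+1) → ℝ) with hx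
    refine ⟨x, ?_, ?_⟩
    · rw [mem_sphere_zero_iff_norm, EuclideanSpace.norm_eq]
      have : ∑ i : Fin (n+1), ‖x i‖ ^ 2 = 1 := by
        rw [Fin.sum_univ_castSucc]
        have h1 : ∀ j : Fin n, x j.castSucc = u j := fun j => by
          simp [hx, Fin.snoc_castSucc]
        have h2 : x (Fin.last n) = c := by simp [hx, Fin.snoc_last]
        have h3 : ∑ j : Fin n, ‖x j.castSucc‖ ^ 2 = ∑ j, u j ^ 2 := by
          apply Finset.sum_congr rfl
          intro j _
          rw [h1 j, Real.norm_eq_abs, sq_abs]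
        rw [h3, h2, Real.norm_eq_abs, sq_abs, hc, Real.sq_sqrt (by linarith)]
        ring
      rw [this, Real.sqrt_one]
    · funext j
      simp only [hproj]
      show x j.castSucc = u j
      simp [hx, Fin.snoc_castSucc]
  have key : volume (closedBall (0 : Fin n → ℝ) (((n:ℝ)+1))⁻¹)
      ≤ μH[(n:ℝ)] (sphere (0:E) 1) := by
    have h1 : μH[(n:ℝ)] (closedBall (0 : Fin n → ℝ) (((n:ℝ)+1))⁻¹)
        ≤ μH[(n:ℝ)] (proj '' (sphere (0:E) 1)) := measure_mono hsub
    have h2 : μH[(n:ℝ)] (proj '' (sphere (0:E) 1)) ≤ μH[(n:ℝ)] (sphere (0:E) 1) := by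
      have := hlip.hausdorffMeasure_image_le (d := (n:ℝ)) (Nat.cast_nonneg n) (sphere (0:E) 1)
      simpa using this
    have h3 : (μH[(n:ℝ)] : Measure (Fin n → ℝ)) = volume := by
      rw [← hausdorffMeasure_pi_real (ι := Fin n)]
      norm_num
    calc volume (closedBall (0 : Fin n → ℝ) (((n:ℝ)+1))⁻¹)
        = μH[(n:ℝ)] (closedBall (0 : Fin n → ℝ) (((n:ℝ)+1))⁻¹) := by rw [h3]
      _ ≤ μH[(n:ℝ)] (proj '' (sphere (0:E) 1)) := h1
      _ ≤ μH[(n:ℝ)] (sphere (0:E) 1) := h2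
  refine lt_of_lt_of_le ?_ key
  apply measure_closedBall_pos
  positivity


noncomputable def toE {k : ℕ} (x : Fin k → ℝ) : EuclideanSpace ℝ (Fin k) := (WithLp.equiv 2 _).symm x

lemma toE_apply {k : ℕ} (x : Fin k → ℝ) (i : Fin k) : toE x i = x i := rfl
lemma toE_sub {k : ℕ} (x y : Fin k → ℝ) : toE x - toE y = toE (x - y) := rfl
lemma toE_smul {k : ℕ} (c : ℝ) (x : Fin k → ℝ) : c • toE x = toE (c • x) := rfl

lemma sphere_meas_fin (n : ℕ) :
    μH[(n:ℝ)] (sphere (0 : EuclideanSpace ℝ (Fin (n+1))) 1) < ∞ := by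
  set K : Set (Fin n → ℝ) := closedBall 0 1 with hK
  set g : Fin (n+1) → ℝ → (Fin n → ℝ) → EuclideanSpace ℝ (Fin (n+1)) := fun i σ u =>
    (fun y : EuclideanSpace ℝ (Fin (n+1)) => ‖y‖⁻¹ • y) (toE (Fin.insertNth i σ u)) with hg
  have hnorm_ge : ∀ (i : Fin (n+1)) (σ : ℝ), |σ| = 1 → ∀ u : Fin n → ℝ,
      1 ≤ ‖toE (Fin.insertNth i σ u)‖ := by
    intro i σ hσ u
    have h := coord_le (toE (Fin.insertNth i σ u)) i
    rwa [toE_apply, show (Fin.insertNth i σ u : Fin (n+1) → ℝ) i = σ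
      from @Fin.insertNth_apply_same n (fun _ => ℝ) i σ u, hσ] at h
  have hdiff : ∀ (i : Fin (n+1)) (σ : ℝ) (u w : Fin n → ℝ),
      ‖toE (Fin.insertNth i σ u) - toE (Fin.insertNth i σ w)‖ ≤ ((n:ℝ)+1) * dist u w := by
    intro i σ u w
    rw [toE_sub]
    have hEnorm : ‖toE (Fin.insertNth i σ u - Fin.insertNth i σ w)‖
        = Real.sqrt (∑ k, ‖(Fin.insertNth i σ u - Fin.insertNth i σ w : Fin (n+1) → ℝ) k‖ ^ 2) :=
      EuclideanSpace.norm_eq _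
    have hsum : ∑ k, ‖(Fin.insertNth i σ u - Fin.insertNth i σ w : Fin (n+1) → ℝ) k‖ ^ 2
        = ∑ j : Fin n, ‖u j - w j‖ ^ 2 := by
      rw [Fin.sum_univ_succAbove _ i]
      have h0 : (Fin.insertNth i σ u - Fin.insertNth i σ w : Fin (n+1) → ℝ) i = 0 := by
        rw [Pi.sub_apply, @Fin.insertNth_apply_same n (fun _ => ℝ) i σ u,
          @Fin.insertNth_apply_same n (fun _ => ℝ) i σ w, sub_self]
      rw [h0]
      simp only [norm_zero, ne_eq, OfNat.ofNat_ne_zero, not_false_eq_true, zero_pow, zero_add]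
      apply Finset.sum_congr rfl
      intro j _
      rw [Pi.sub_apply]
      simp
    have hbound : ∑ j : Fin n, ‖u j - w j‖ ^ 2 ≤ (n:ℝ) * dist u w ^ 2 := by
      calc ∑ j : Fin n, ‖u j - w j‖ ^ 2 ≤ ∑ _j : Fin n, dist u w ^ 2 := by
            apply Finset.sum_le_sum
            intro j _
            have h1 : ‖u j - w j‖ = dist (u j) (w j) := (dist_eq_norm _ _).symm
            have h2 : dist (u j) (w j) ≤ dist u w := dist_le_pi_dist u w j
            nlinarith [dist_nonneg (x := u j) (y := w j), dist_nonneg (x := u) (y := w)]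
        _ = (n:ℝ) * dist u w ^ 2 := by simp [Finset.sum_const, mul_comm]
    rw [hEnorm, hsum]
    calc Real.sqrt (∑ j : Fin n, ‖u j - w j‖ ^ 2) ≤ Real.sqrt (((n:ℝ)+1)^2 * dist u w ^ 2) := by
          apply Real.sqrt_le_sqrt
          nlinarith [hbound, sq_nonneg (dist u w), Nat.cast_nonneg (α := ℝ) n,
            mul_nonneg (by positivity : (0:ℝ) ≤ (n:ℝ)^2 + (n:ℝ) + 1) (sq_nonneg (dist u w))]
      _ = ((n:ℝ)+1) * dist u w := by
          rw [show ((n:ℝ)+1)^2 * dist u w ^ 2 = (((n:ℝ)+1) * dist u w)^2 by ring,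
            Real.sqrt_sq (by positivity)]
  have hlip : ∀ (i : Fin (n+1)) (σ : ℝ), |σ| = 1 →
      LipschitzOnWith (2 * ((n:ℝ≥0)+1)) (g i σ) K := by
    intro i σ hσ
    rw [lipschitzOnWith_iff_dist_le_mul]
    intro u _ w _
    have h1 := radial_lip (hnorm_ge i σ hσ u) (hnorm_ge i σ hσ w)
    have h2 := hdiff i σ u w
    have hd0 := dist_nonneg (x := u) (y := w)
    have hcast : ((2 * ((n:ℝ≥0)+1) : ℝ≥0) : ℝ) = 2*((n:ℝ)+1) := by push_cast; ring
    rw [hg, dist_eq_norm]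
    show ‖‖toE (Fin.insertNth i σ u)‖⁻¹ • toE (Fin.insertNth i σ u)
          - ‖toE (Fin.insertNth i σ w)‖⁻¹ • toE (Fin.insertNth i σ w)‖
        ≤ ((2 * ((n:ℝ≥0)+1) : ℝ≥0) : ℝ) * dist u w
    rw [hcast]
    nlinarith [h1, h2]
  have hcover : sphere (0 : EuclideanSpace ℝ (Fin (n+1))) 1 ⊆
      ⋃ p : Fin (n+1) × Bool, g p.1 (cond p.2 1 (-1)) '' K := by
    intro x hx
    have hxn : ‖x‖ = 1 := mem_sphere_zero_iff_norm.mp hx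
    obtain ⟨i, -, hi⟩ := Finset.exists_max_image Finset.univ (fun j => |x j|)
      ⟨0, Finset.mem_univ 0⟩
    have hi' : ∀ j, |x j| ≤ |x i| := fun j => hi j (Finset.mem_univ j)
    have hipos : 0 < |x i| := by
      by_contra hle
      push_neg at hle
      have hz : ∀ j, x j = 0 := fun j =>
        abs_eq_zero.mp (le_antisymm (le_trans (hi' j) hle) (abs_nonneg _))
      have : x = 0 := PiLp.ext (fun j => by simp [hz j])
      rw [this, norm_zero] at hxn
      exact one_ne_zero hxn.symm
    set σ : ℝ := if 0 < x i then 1 else -1 with hσdef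
    have hσval : σ = |x i|⁻¹ * x i := by
      rcases lt_trichotomy (x i) 0 with h | h | h
      · rw [hσdef, if_neg (by linarith), abs_of_neg h, ← neg_inv, neg_mul,
          inv_mul_cancel₀ h.ne]
      · rw [h, abs_zero] at hipos; exact absurd hipos (lt_irrefl 0)
      · rw [hσdef, if_pos h, abs_of_pos h, inv_mul_cancel₀ h.ne']
    set u : Fin n → ℝ := fun j => |x i|⁻¹ * x (i.succAbove j) with hu
    have hins : (Fin.insertNth i σ u : Fin (n+1) → ℝ) = fun k => |x i|⁻¹ * x k := by
      rw [← @Fin.insertNth_self_removeNth n (fun _ => ℝ) i (fun k => |x i|⁻¹ * x k), hσval]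
      rfl
    refine Set.mem_iUnion.mpr ⟨⟨i, decide (0 < x i)⟩, ⟨u, ?_, ?_⟩⟩
    · rw [hK, mem_closedBall_zero_iff]
      apply pi_norm_le_iff_of_nonneg zero_le_one |>.mpr
      intro j
      rw [hu]
      simp only [Real.norm_eq_abs, abs_mul, abs_inv, abs_abs]
      rw [inv_mul_le_iff₀ hipos, mul_one]
      exact hi' _
    · show g i (cond (decide (0 < x i)) 1 (-1)) u = x
      have hcond : (cond (decide (0 < x i)) 1 (-1) : ℝ) = σ := by
        rw [hσdef]
        by_cases h : 0 < x i <;> simp [h]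
      rw [hcond, hg]
      simp only []
      have hyx : toE (Fin.insertNth i σ u) = |x i|⁻¹ • x := by
        rw [hins]
        rfl
      rw [hyx, norm_smul, Real.norm_eq_abs, abs_inv, abs_abs, hxn, mul_one, inv_inv, smul_smul,
        mul_inv_cancel₀ hipos.ne', one_smul]
  calc μH[(n:ℝ)] (sphere (0 : EuclideanSpace ℝ (Fin (n+1))) 1)
      ≤ μH[(n:ℝ)] (⋃ p : Fin (n+1) × Bool, g p.1 (cond p.2 1 (-1)) '' K) := measure_mono hcover
    _ ≤ ∑' p : Fin (n+1) × Bool, μH[(n:ℝ)] (g p.1 (cond p.2 1 (-1)) '' K) := measure_iUnion_le _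
    _ < ∞ := by
        rw [tsum_fintype]
        apply ENNReal.sum_lt_top.mpr
        intro p _
        have hσ1 : |(cond p.2 1 (-1) : ℝ)| = 1 := by cases p.2 <;> simp
        have h := (hlip p.1 _ hσ1).hausdorffMeasure_image_le (d := (n:ℝ)) (Nat.cast_nonneg n)
        apply lt_of_le_of_lt h
        apply ENNReal.mul_lt_top
        · exact ENNReal.rpow_lt_top_of_nonneg (Nat.cast_nonneg n) ENNReal.coe_ne_top
        · have h3 : (μH[(n:ℝ)] : Measure (Fin n → ℝ)) = volume := by
            rw [← hausdorffMeasure_pi_real (ι := Fin n)]; norm_num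
          rw [h3, hK]
          exact (isCompact_closedBall 0 1).measure_lt_top


lemma sphereUniform_eq (n : ℕ) {s : ℝ} (hs : s ≠ 0) :
    sphereUniform (n+1) s = (μH[(n:ℝ)] (sphere (0 : EuclideanSpace ℝ (Fin (n+1))) s))⁻¹ •
      (μH[(n:ℝ)]).restrict (sphere (0 : EuclideanSpace ℝ (Fin (n+1))) s) := by
  rw [sphereUniform, if_neg hs]
  norm_num

lemma sphere_smul_eq (n : ℕ) {s : ℝ} (hs : 0 < s) :
    sphere (0 : EuclideanSpace ℝ (Fin (n+1))) s
      = s • sphere (0 : EuclideanSpace ℝ (Fin (n+1))) 1 := by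
  rw [smul_sphere s (0 : EuclideanSpace ℝ (Fin (n+1))) zero_le_one, smul_zero,
    Real.norm_eq_abs, abs_of_pos hs, mul_one]

lemma sphere_meas_s (n : ℕ) {s : ℝ} (hs : 0 < s) :
    μH[(n:ℝ)] (sphere (0 : EuclideanSpace ℝ (Fin (n+1))) s)
      = (‖s‖₊ ^ (n:ℝ) : ℝ≥0) * μH[(n:ℝ)] (sphere (0 : EuclideanSpace ℝ (Fin (n+1))) 1) := by
  rw [sphere_smul_eq n hs,
    MeasureTheory.Measure.hausdorffMeasure_smul₀ (Nat.cast_nonneg n) hs.ne' _]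
  rfl

lemma sphere_meas_pos_s (n : ℕ) {s : ℝ} (hs : 0 < s) :
    0 < μH[(n:ℝ)] (sphere (0 : EuclideanSpace ℝ (Fin (n+1))) s) := by
  rw [sphere_meas_s n hs]
  apply ENNReal.mul_pos _ (sphere_meas_pos n).ne'
  simp only [ne_eq, ENNReal.coe_eq_zero]
  exact (NNReal.rpow_pos (nnnorm_pos.mpr hs.ne')).ne'

lemma sphere_meas_fin_s (n : ℕ) {s : ℝ} (hs : 0 < s) :
    μH[(n:ℝ)] (sphere (0 : EuclideanSpace ℝ (Fin (n+1))) s) < ∞ := by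
  rw [sphere_meas_s n hs]
  exact ENNReal.mul_lt_top ENNReal.coe_lt_top (sphere_meas_fin n)

lemma sphereUniform_prob (n : ℕ) {s : ℝ} (hs : 0 < s) :
    IsProbabilityMeasure (sphereUniform (n+1) s) := by
  constructor
  rw [sphereUniform_eq n hs.ne', Measure.smul_apply,
    Measure.restrict_apply MeasurableSet.univ, Set.univ_inter, smul_eq_mul]
  exact ENNReal.inv_mul_cancel (sphere_meas_pos_s n hs).ne' (sphere_meas_fin_s n hs).ne

lemma sphereUniform_ae (n : ℕ) {s : ℝ} (hs : 0 < s) :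
    ∀ᵐ x ∂(sphereUniform (n+1) s), x ∈ sphere (0 : EuclideanSpace ℝ (Fin (n+1))) s := by
  rw [ae_iff, sphereUniform_eq n hs.ne', Measure.smul_apply]
  have hset : {a : EuclideanSpace ℝ (Fin (n+1)) | a ∉ sphere (0 : EuclideanSpace ℝ (Fin (n+1))) s}
      = (sphere (0 : EuclideanSpace ℝ (Fin (n+1))) s)ᶜ := rfl
  rw [hset, Measure.restrict_apply isClosed_sphere.measurableSet.compl,
    Set.compl_inter_self, measure_empty, smul_eq_mul, mul_zero]

lemma sphereUniform_map (n : ℕ) {s : ℝ} (hs : 0 < s) :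
    sphereUniform (n+1) s
      = Measure.map (fun y : EuclideanSpace ℝ (Fin (n+1)) => s • y) (sphereUniform (n+1) 1) := by
  have hemb : MeasurableEmbedding (fun y : EuclideanSpace ℝ (Fin (n+1)) => s • y) :=
    (Homeomorph.smulOfNeZero s hs.ne').measurableEmbedding
  ext A hA
  rw [sphereUniform_eq n hs.ne', sphereUniform_eq n one_ne_zero, Measure.map_smul,
    Measure.smul_apply, Measure.smul_apply, hemb.map_apply,
    Measure.restrict_apply hA, Measure.restrict_apply (hemb.measurable hA)]
  have hpre : (fun y : EuclideanSpace ℝ (Fin (n+1)) => s • y) ⁻¹' A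
      ∩ sphere 0 1 = s⁻¹ • (A ∩ sphere (0 : EuclideanSpace ℝ (Fin (n+1))) s) := by
    rw [Set.preimage_smul₀ hs.ne', Set.smul_set_inter₀ (inv_ne_zero hs.ne'),
      sphere_smul_eq n hs, inv_smul_smul₀ hs.ne']
  rw [hpre]
  have hsm : μH[(n:ℝ)] (s⁻¹ • (A ∩ sphere (0 : EuclideanSpace ℝ (Fin (n+1))) s))
      = (‖s⁻¹‖₊ ^ (n:ℝ) : ℝ≥0) * μH[(n:ℝ)] (A ∩ sphere (0 : EuclideanSpace ℝ (Fin (n+1))) s) :=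
    MeasureTheory.Measure.hausdorffMeasure_smul₀ (Nat.cast_nonneg n) (inv_ne_zero hs.ne') _
  rw [hsm, sphere_meas_s n hs]
  set c := μH[(n:ℝ)] (A ∩ sphere (0 : EuclideanSpace ℝ (Fin (n+1))) s)
  set M := μH[(n:ℝ)] (sphere (0 : EuclideanSpace ℝ (Fin (n+1))) 1)
  have hM0 : M ≠ 0 := (sphere_meas_pos n).ne'
  have hMt : M ≠ ∞ := (sphere_meas_fin n).ne
  have hk0 : ((‖s‖₊ ^ (n:ℝ) : ℝ≥0) : ℝ≥0∞) ≠ 0 := by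
    simp only [ne_eq, ENNReal.coe_eq_zero]
    exact (NNReal.rpow_pos (nnnorm_pos.mpr hs.ne')).ne'
  have hkt : ((‖s‖₊ ^ (n:ℝ) : ℝ≥0) : ℝ≥0∞) ≠ ∞ := ENNReal.coe_ne_top
  have hinv : ((‖s⁻¹‖₊ ^ (n:ℝ) : ℝ≥0) : ℝ≥0∞) = ((‖s‖₊ ^ (n:ℝ) : ℝ≥0) : ℝ≥0∞)⁻¹ := by
    rw [nnnorm_inv, NNReal.inv_rpow, ENNReal.coe_inv (NNReal.rpow_pos (nnnorm_pos.mpr hs.ne')).ne']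
  rw [hinv, smul_eq_mul, smul_eq_mul, ENNReal.mul_inv (Or.inl hk0) (Or.inl hkt)]
  ring


/-- The three-case formula for `H^{(α,μ^s,m)}(tv)`. -/
theorem stmt7 (m : ℕ) (r α s t : ℝ) (hr : 0 < r) (hα : r < α)
    (hs : s ∈ Set.Icc 0 r) (v : EuclideanSpace ℝ (Fin m)) (hv : ‖v‖ = 1)
    (ht : t ∈ Set.Icc 0 r) :
    (s = 0 → Hfun m α r (sphereUniform m s) (t • v) = t) ∧
    (0 < s → s ≤ α - t →
      Hfun m α r (sphereUniform m s) (t • v) =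
        (∫ x, dist (t • v) x ∂(sphereUniform m s)) - s) ∧
    (α - t ≤ s →
      Real.arccos ((s ^ 2 + t ^ 2 - α ^ 2) / (2 * s * t)) ≤ π ∧
      Hfun m α r (sphereUniform m s) (t • v) =
        α - s - ∫ θ in Set.Icc 0 (Real.arccos ((s ^ 2 + t ^ 2 - α ^ 2) / (2 * s * t))),
          (α - Real.sqrt (s ^ 2 + t ^ 2 - 2 * s * t * Real.cos θ))
          ∂(Measure.map (fun x => Real.arccos ⟪v, x⟫) (sphereUniform m 1))) := by
  obtain ⟨hs0, hsr⟩ := hs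
  obtain ⟨ht0, htr⟩ := ht
  have htv : ‖t • v‖ = t := by
    rw [norm_smul, hv, mul_one, Real.norm_eq_abs, abs_of_nonneg ht0]
  refine ⟨?_, ?_, ?_⟩
  · -- case s = 0
    intro hseq
    subst hseq
    rw [Hfun, sphereUniform, if_pos rfl]
    classical
    rw [setIntegral_dirac (fun x => α - ‖x‖) 0 _,
      setIntegral_dirac (fun x => α - dist (t • v) x) 0 _]
    have h1 : (0 : EuclideanSpace ℝ (Fin m)) ∈ closedBall (0 : EuclideanSpace ℝ (Fin m)) r :=
      mem_closedBall_self hr.le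
    have h2 : (0 : EuclideanSpace ℝ (Fin m)) ∈
        closedBall (t • v) α ∩ closedBall (0 : EuclideanSpace ℝ (Fin m)) r := by
      refine ⟨?_, h1⟩
      rw [mem_closedBall, dist_comm, dist_zero_right, htv]
      linarith
    rw [if_pos h1, if_pos h2, dist_zero_right, htv, norm_zero]
    ring
  · -- case 0 < s ≤ α - t
    intro hs0' hst
    obtain ⟨n, rfl⟩ : ∃ n, m = n + 1 := by
      cases m with
      | zero =>
        exfalso
        have : v = 0 := Subsingleton.elim v 0
        rw [this, norm_zero] at hv
        exact one_ne_zero hv.symm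
      | succ n => exact ⟨n, rfl⟩
    haveI := sphereUniform_prob n hs0'
    have hae := sphereUniform_ae n hs0'
    set ν := sphereUniform (n+1) s with hν
    have haer : ∀ᵐ x ∂ν, ‖x‖ = s := hae.mono fun x hx => mem_sphere_zero_iff_norm.mp hx
    have hsupp1 : ν.restrict (closedBall 0 r) = sphereUniform (n+1) s := by
      apply Measure.restrict_eq_self_of_ae_mem
      filter_upwards [haer] with x hx
      rw [mem_closedBall_zero_iff, hx]; exact hsr
    have hsupp2 : ν.restrict (closedBall (t • v) α
        ∩ closedBall (0 : EuclideanSpace ℝ (Fin (n+1))) r) = ν := by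
      apply Measure.restrict_eq_self_of_ae_mem
      filter_upwards [haer] with x hx
      constructor
      · rw [mem_closedBall, dist_comm]
        calc dist (t • v) x ≤ dist (t • v) 0 + dist 0 x := dist_triangle _ _ _
          _ = t + s := by rw [dist_zero_right, dist_zero_left, htv, hx]
          _ ≤ α := by linarith
      · rw [mem_closedBall_zero_iff, hx]; exact hsr
    have hint : Integrable (fun x => dist (t • v) x) ν := by
      refine (integrable_const (t + s)).mono'
        ((Continuous.dist continuous_const continuous_id).aestronglyMeasurable) ?_
      filter_upwards [haer] with x hx
      rw [Real.norm_eq_abs, abs_of_nonneg dist_nonneg]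
      calc dist (t • v) x ≤ dist (t • v) 0 + dist 0 x := dist_triangle _ _ _
        _ = t + s := by rw [dist_zero_right, dist_zero_left, htv, hx]
    have h1 : ∫ x, (α - ‖x‖) ∂ν = α - s := by
      rw [integral_congr_ae (g := fun _ => α - s) (haer.mono fun x hx => by rw [hx]),
        integral_const, probReal_univ, one_smul]
    have h2 : ∫ x, (α - dist (t • v) x) ∂ν = α - ∫ x, dist (t • v) x ∂ν := by
      rw [integral_sub (integrable_const α) hint, integral_const, probReal_univ,
        one_smul]
    rw [Hfun, hsupp1, hsupp2, h1, h2]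
    ring
  · -- case α - t ≤ s
    intro hst
    refine ⟨Real.arccos_le_pi _, ?_⟩
    obtain ⟨n, rfl⟩ : ∃ n, m = n + 1 := by
      cases m with
      | zero =>
        exfalso
        have : v = 0 := Subsingleton.elim v 0
        rw [this, norm_zero] at hv
        exact one_ne_zero hv.symm
      | succ n => exact ⟨n, rfl⟩
    have hα0 : (0:ℝ) < α := lt_trans hr hα
    have hs0' : 0 < s := by linarith
    have ht0' : 0 < t := by linarith
    have h2st : (0:ℝ) < 2 * s * t := by positivity
    haveI := sphereUniform_prob n hs0'
    haveI := sphereUniform_prob n one_pos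
    have hae := sphereUniform_ae n hs0'
    have hae1 := sphereUniform_ae n one_pos
    have haer : ∀ᵐ x ∂(sphereUniform (n+1) s), ‖x‖ = s := hae.mono fun x hx => mem_sphere_zero_iff_norm.mp hx
    have haer1 : ∀ᵐ y ∂(sphereUniform (n+1) 1), ‖y‖ = 1 := hae1.mono fun x hx => mem_sphere_zero_iff_norm.mp hx
    set c : ℝ := (s ^ 2 + t ^ 2 - α ^ 2) / (2 * s * t) with hc
    set θb : ℝ := Real.arccos c with hθb
    have hc1 : c ≤ 1 := by
      rw [hc, div_le_one h2st]
      nlinarith [sq_nonneg (s - t)]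
    have hcm1 : (-1:ℝ) ≤ c := by
      rw [hc, le_div_iff₀ h2st]
      have : α ≤ s + t := by linarith
      nlinarith
    have hcosθb : Real.cos θb = c := Real.cos_arccos hcm1 hc1
    -- first integral
    have hsupp1 : (sphereUniform (n+1) s).restrict (closedBall 0 r) = sphereUniform (n+1) s := by
      apply Measure.restrict_eq_self_of_ae_mem
      filter_upwards [haer] with x hx
      rw [mem_closedBall_zero_iff, hx]; exact hsr
    have h1 : ∫ x, (α - ‖x‖) ∂(sphereUniform (n+1) s) = α - s := by
      rw [integral_congr_ae (g := fun _ => α - s) (haer.mono fun x hx => by rw [hx]),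
        integral_const, probReal_univ, one_smul]
    -- set congruence for the second integral
    have hsetae : (closedBall (t • v) α ∩ closedBall (0 : EuclideanSpace ℝ (Fin (n+1))) r
        : Set (EuclideanSpace ℝ (Fin (n+1)))) =ᵐ[sphereUniform (n+1) s] closedBall (t • v) α := by
      filter_upwards [haer] with x hx
      have hxr : x ∈ closedBall (0 : EuclideanSpace ℝ (Fin (n+1))) r := by
        rw [mem_closedBall_zero_iff, hx]; exact hsr
      show (x ∈ closedBall (t • v) α ∩ closedBall 0 r) = (x ∈ closedBall (t • v) α)
      simp [Set.mem_inter_iff, hxr]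
    have hmapν := sphereUniform_map n hs0'
    have hφc : Continuous (fun y : EuclideanSpace ℝ (Fin (n+1)) => s • y) :=
      continuous_const_smul s
    have hφm := hφc.measurable
    have hfc : Continuous (fun x : EuclideanSpace ℝ (Fin (n+1)) => Real.arccos ⟪v, x⟫) :=
      Real.continuous_arccos.comp (Continuous.inner continuous_const continuous_id)
    set f : EuclideanSpace ℝ (Fin (n+1)) → ℝ := fun x => Real.arccos ⟪v, x⟫ with hf
    -- transform LHS integral to μ1
    have hL : ∫ x in closedBall (t • v) α, (α - dist (t • v) x) ∂(sphereUniform (n+1) s)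
        = ∫ y in (fun y : EuclideanSpace ℝ (Fin (n+1)) => s • y) ⁻¹' (closedBall (t • v) α),
            (α - dist (t • v) (s • y)) ∂(sphereUniform (n+1) 1) := by
      rw [hmapν]
      exact setIntegral_map measurableSet_closedBall
        ((continuous_const.sub (Continuous.dist continuous_const continuous_id)).aestronglyMeasurable)
        hφm.aemeasurable
    have hR : (∫ θ in Set.Icc 0 θb, (α - Real.sqrt (s ^ 2 + t ^ 2 - 2 * s * t * Real.cos θ))
          ∂(Measure.map f (sphereUniform (n+1) 1)))
        = ∫ y in f ⁻¹' (Set.Icc 0 θb),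
            (α - Real.sqrt (s ^ 2 + t ^ 2 - 2 * s * t * Real.cos (f y))) ∂(sphereUniform (n+1) 1) :=
      setIntegral_map measurableSet_Icc
        ((continuous_const.sub (Real.continuous_sqrt.comp
          (continuous_const.sub (continuous_const.mul Real.continuous_cos)))).aestronglyMeasurable)
        hfc.measurable.aemeasurable
    -- pointwise facts on the unit sphere
    have key : ∀ y : EuclideanSpace ℝ (Fin (n+1)), ‖y‖ = 1 →
        dist (t • v) (s • y) = Real.sqrt (s ^ 2 + t ^ 2 - 2 * s * t * Real.cos (f y))
        ∧ (s • y ∈ closedBall (t • v) α ↔ f y ∈ Set.Icc 0 θb) := by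
      intro y hy
      set z : ℝ := ⟪v, y⟫ with hz
      have hz1 : |z| ≤ 1 := by
        have := abs_real_inner_le_norm v y
        rwa [hv, hy, one_mul] at this
      have hzl : -1 ≤ z := neg_le_of_abs_le hz1
      have hzu : z ≤ 1 := le_of_abs_le hz1
      have hcosf : Real.cos (f y) = z := Real.cos_arccos hzl hzu
      have hsq : dist (t • v) (s • y) ^ 2 = s ^ 2 + t ^ 2 - 2 * s * t * z := by
        rw [dist_eq_norm, norm_sub_sq_real, real_inner_smul_left, real_inner_smul_right,
          norm_smul, norm_smul, hv, hy, Real.norm_eq_abs, Real.norm_eq_abs,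
          abs_of_pos hs0', abs_of_pos ht0']
        ring
      have hdist : dist (t • v) (s • y) = Real.sqrt (s ^ 2 + t ^ 2 - 2 * s * t * z) := by
        rw [← hsq, Real.sqrt_sq dist_nonneg]
      constructor
      · rw [hdist, hcosf]
      · have hmem1 : s • y ∈ closedBall (t • v) α ↔ dist (t • v) (s • y) ≤ α := by
          rw [mem_closedBall, dist_comm]
        have hiff1 : dist (t • v) (s • y) ≤ α ↔ c ≤ z := by
          constructor
          · intro h
            have hq : s ^ 2 + t ^ 2 - 2 * s * t * z ≤ α ^ 2 := by
              rw [← hsq]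
              nlinarith [dist_nonneg (x := t • v) (y := s • y)]
            rw [hc, div_le_iff₀ h2st]
            nlinarith
          · intro h
            have hq : s ^ 2 + t ^ 2 - 2 * s * t * z ≤ α ^ 2 := by
              rw [hc, div_le_iff₀ h2st] at h
              nlinarith
            rw [hdist, ← Real.sqrt_sq hα0.le]
            exact Real.sqrt_le_sqrt (by linarith)
        have hiff2 : c ≤ z ↔ f y ≤ θb := by
          constructor
          · intro h
            have harcmono : ∀ a b : ℝ, a ≤ b → Real.arccos b ≤ Real.arccos a := by
              intro a b hab
              rw [Real.arccos_eq_pi_div_two_sub_arcsin, Real.arccos_eq_pi_div_two_sub_arcsin]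
              have := Real.monotone_arcsin hab
              linarith
            exact harcmono c z h
          · intro h
            have h2 : Real.cos θb ≤ Real.cos (f y) :=
              Real.cos_le_cos_of_nonneg_of_le_pi (Real.arccos_nonneg _)
                (Real.arccos_le_pi _) h
            rw [hcosθb, hcosf] at h2
            exact h2
        rw [hmem1, hiff1, hiff2, Set.mem_Icc]
        constructor
        · intro h; exact ⟨Real.arccos_nonneg _, h⟩
        · intro h; exact h.2
    -- middle equality
    have hmid : (∫ y in (fun y : EuclideanSpace ℝ (Fin (n+1)) => s • y) ⁻¹' (closedBall (t • v) α),
            (α - dist (t • v) (s • y)) ∂(sphereUniform (n+1) 1))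
        = ∫ y in f ⁻¹' (Set.Icc 0 θb),
            (α - Real.sqrt (s ^ 2 + t ^ 2 - 2 * s * t * Real.cos (f y))) ∂(sphereUniform (n+1) 1) := by
      rw [← integral_indicator (hφm measurableSet_closedBall),
        ← integral_indicator (hfc.measurable measurableSet_Icc)]
      apply integral_congr_ae
      filter_upwards [haer1] with y hy
      obtain ⟨k1, k2⟩ := key y hy
      by_cases hmem : s • y ∈ closedBall (t • v) α
      · rw [Set.indicator_of_mem (by exact hmem), Set.indicator_of_mem (by exact k2.mp hmem), k1]
      · rw [Set.indicator_of_notMem (by exact hmem),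
          Set.indicator_of_notMem (by exact fun hcon => hmem (k2.mpr hcon))]
    rw [Hfun, hsupp1, Measure.restrict_congr_set hsetae, h1, hL, hmid, ← hR]
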